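/- The graph M is 2-arc-regular: for any triples (x0, x1, x2) and (y0, y1, y2) of vertices of M with x0 adjacent to x1, x1 adjacent to x2, x0 ≠ x2, and likewise y0 adjacent to y1, y1 adjacent to y2, y0 ≠ y2, there exists exactly one graph automorphism φ of M with φ x0 = y0, φ x1 = y1 and φ x2 = y2. -/

import Mathlib

/-- The Möbius–Kantor graph, realized as the graph on `ZMod 16` in which
distinct `x, y` are adjacent iff there are `a ∈ {0, 1, 3}` and `v : ZMod 16`
with `v.val` even such that `{x, y} = {v, v + (2a - 1)}`. -/
def MKGraph : SimpleGraph (ZMod 16) where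
  Adj x y := x ≠ y ∧ ∃ a ∈ ({0, 1, 3} : Set ℕ), ∃ v : ZMod 16, Even v.val ∧
    s(x, y) = s(v, v + (2 * (a : ZMod 16) - 1))
  symm := by
    constructor
    rintro x y ⟨hxy, a, ha, v, hv, h⟩
    exact ⟨hxy.symm, a, ha, v, hv, Sym2.eq_swap.trans h⟩
  loopless := by
    constructor
    rintro x ⟨hxx, -⟩
    exact hxx rfl

def adjP (x y : ZMod 16) : Prop :=
  x ≠ y ∧ ((Even x.val ∧ (y = x + 1 ∨ y = x - 1 ∨ y = x + 5)) ∨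
           (Even y.val ∧ (x = y + 1 ∨ x = y - 1 ∨ x = y + 5)))

instance : DecidablePred fun p : ZMod 16 × ZMod 16 => adjP p.1 p.2 := by
  intro p; unfold adjP; infer_instance

instance (x y : ZMod 16) : Decidable (adjP x y) := by unfold adjP; infer_instance

lemma adj_iff (x y : ZMod 16) : MKGraph.Adj x y ↔ adjP x y := by
  constructor
  · rintro ⟨hne, a, ha, v, hv, hs⟩
    refine ⟨hne, ?_⟩
    rw [Sym2.eq_iff] at hs
    simp only [Set.mem_insert_iff, Set.mem_singleton_iff] at ha
    rcases ha with rfl | rfl | rfl <;>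
      rcases hs with ⟨rfl, rfl⟩ | ⟨rfl, rfl⟩
    · exact Or.inl ⟨hv, Or.inr (Or.inl (by ring_nf))⟩
    · exact Or.inr ⟨hv, Or.inr (Or.inl (by ring_nf))⟩
    · exact Or.inl ⟨hv, Or.inl (by ring_nf)⟩
    · exact Or.inr ⟨hv, Or.inl (by ring_nf)⟩
    · exact Or.inl ⟨hv, Or.inr (Or.inr (by ring_nf))⟩
    · exact Or.inr ⟨hv, Or.inr (Or.inr (by ring_nf))⟩
  · rintro ⟨hne, h⟩
    refine ⟨hne, ?_⟩
    rcases h with ⟨hv, h⟩ | ⟨hv, h⟩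
    · rcases h with rfl | rfl | rfl
      · exact ⟨1, by simp, x, hv, by norm_num⟩
      · exact ⟨0, by simp, x, hv, by norm_num [sub_eq_add_neg]⟩
      · exact ⟨3, by simp, x, hv, by norm_num⟩
    · rcases h with rfl | rfl | rfl
      · exact ⟨1, by simp, y, hv, Sym2.eq_swap.trans (by norm_num)⟩
      · exact ⟨0, by simp, y, hv, Sym2.eq_swap.trans (by norm_num [sub_eq_add_neg])⟩
      · exact ⟨3, by simp, y, hv, Sym2.eq_swap.trans (by norm_num)⟩

def mkIso (f g : ZMod 16 → ZMod 16) (h1 : Function.LeftInverse g f)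
    (h2 : Function.RightInverse g f)
    (hadj : ∀ a b, adjP (f a) (f b) ↔ adjP a b) : MKGraph ≃g MKGraph where
  toEquiv := ⟨f, g, h1, h2⟩
  map_rel_iff' := by
    intro a b
    simp only [Equiv.coe_fn_mk]
    rw [adj_iff, adj_iff]
    exact hadj a b

def affF (b : ZMod 16) (v : ZMod 16) : ZMod 16 :=
  if Even b.val then b + 1 - v else v + b - 1

def affInv (b : ZMod 16) (v : ZMod 16) : ZMod 16 :=
  if Even b.val then b + 1 - v else v - b + 1

lemma aff_left : ∀ b v : ZMod 16, affInv b (affF b v) = v := by decide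
lemma aff_right : ∀ b v : ZMod 16, affF b (affInv b v) = v := by decide
lemma aff_adj : ∀ b x y : ZMod 16, adjP (affF b x) (affF b y) ↔ adjP x y := by decide
lemma aff_one : ∀ b : ZMod 16, affF b 1 = b := by decide

def affIso (b : ZMod 16) : MKGraph ≃g MKGraph :=
  mkIso (affF b) (affInv b) (aff_left b) (aff_right b) (aff_adj b)

lemma affIso_one (b : ZMod 16) : affIso b 1 = b := aff_one b

def tbl (l : List (ZMod 16)) (v : ZMod 16) : ZMod 16 := l.getD v.val 0

def s1F := tbl [0,1,12,11,10,15,14,13,8,9,4,3,2,7,6,5]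
def s2F := tbl [2,1,0,5,4,3,14,15,10,9,8,13,12,11,6,7]
def s3F := tbl [2,1,12,13,8,7,6,11,10,9,4,5,0,15,14,3]
def s4F := tbl [12,1,0,15,10,11,6,5,4,9,8,7,2,3,14,13]
def s5F := tbl [12,1,2,7,8,13,14,3,4,9,10,15,0,5,6,11]

def isoS1 : MKGraph ≃g MKGraph := mkIso s1F s1F (by decide) (by decide) (by decide)
def isoS2 : MKGraph ≃g MKGraph := mkIso s2F s2F (by decide) (by decide) (by decide)
def isoS3 : MKGraph ≃g MKGraph := mkIso s3F s4F (by decide) (by decide) (by decide)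
def isoS4 : MKGraph ≃g MKGraph := mkIso s4F s3F (by decide) (by decide) (by decide)
def isoS5 : MKGraph ≃g MKGraph := mkIso s5F s5F (by decide) (by decide) (by decide)

lemma build (ψ h : MKGraph ≃g MKGraph) {a b c u w : ZMod 16}
    (h0 : h 0 = u) (h1 : h 1 = 1) (h2 : h 2 = w)
    (hu : ψ.symm a = u) (hb : ψ 1 = b) (hw : ψ.symm c = w) :
    ∃ φ : MKGraph ≃g MKGraph, φ 0 = a ∧ φ 1 = b ∧ φ 2 = c :=
  ⟨h.trans ψ, by rw [RelIso.trans_apply, h0, ← hu, RelIso.apply_symm_apply],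
    by rw [RelIso.trans_apply, h1, hb],
    by rw [RelIso.trans_apply, h2, ← hw, RelIso.apply_symm_apply]⟩

lemma exCanon (a b c : ZMod 16) (hab : adjP a b) (hbc : adjP b c) (hac : a ≠ c) :
    ∃ φ : MKGraph ≃g MKGraph, φ 0 = a ∧ φ 1 = b ∧ φ 2 = c := by
  have k6 : ∀ u w : ZMod 16, adjP u 1 → adjP 1 w → u ≠ w →
      (u = 0 ∧ w = 2) ∨ (u = 0 ∧ w = 12) ∨ (u = 2 ∧ w = 0) ∨ (u = 2 ∧ w = 12) ∨
      (u = 12 ∧ w = 0) ∨ (u = 12 ∧ w = 2) := by decide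
  set ψ := affIso b with hψ
  have hb : ψ.symm b = 1 := by
    conv_lhs => rw [← affIso_one b]
    exact ψ.symm_apply_apply 1
  have mapS : ∀ x y, adjP x y → adjP (ψ.symm x) (ψ.symm y) := fun x y h =>
    (adj_iff _ _).1 (ψ.symm.map_rel_iff.mpr ((adj_iff _ _).2 h))
  have hu := mapS a b hab
  have hw := mapS b c hbc
  rw [hb] at hu hw
  have hne : ψ.symm a ≠ ψ.symm c := fun h => hac (ψ.symm.injective h)
  rcases k6 _ _ hu hw hne with ⟨e1, e2⟩ | ⟨e1, e2⟩ | ⟨e1, e2⟩ | ⟨e1, e2⟩ | ⟨e1, e2⟩ | ⟨e1, e2⟩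
  · exact build ψ (RelIso.refl MKGraph.Adj) rfl rfl rfl e1 (affIso_one b) e2
  · exact build ψ isoS1 rfl rfl rfl e1 (affIso_one b) e2
  · exact build ψ isoS2 rfl rfl rfl e1 (affIso_one b) e2
  · exact build ψ isoS3 rfl rfl rfl e1 (affIso_one b) e2
  · exact build ψ isoS4 rfl rfl rfl e1 (affIso_one b) e2
  · exact build ψ isoS5 rfl rfl rfl e1 (affIso_one b) e2

lemma fixCanon (σ : MKGraph ≃g MKGraph) (h0 : σ 0 = 0) (h1 : σ 1 = 1) (h2 : σ 2 = 2) :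
    ∀ v, σ v = v := by
  have mapA : ∀ x y, adjP x y → adjP (σ x) (σ y) := fun x y h =>
    (adj_iff _ _).1 (σ.map_rel_iff.mpr ((adj_iff _ _).2 h))
  have inj : ∀ x y : ZMod 16, x ≠ y → σ x ≠ σ y := fun x y h e => h (σ.injective e)
  have h12 : σ 12 = 12 := by
    have k : ∀ u : ZMod 16, adjP 1 u → u ≠ 0 → u ≠ 2 → u = 12 := by decide
    have m := mapA 1 12 (by decide); rw [h1] at m
    have n0 := inj 12 0 (by decide); rw [h0] at n0
    have n2 := inj 12 2 (by decide); rw [h2] at n2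
    exact k _ m n0 n2
  have h3 : σ 3 = 3 ∨ σ 3 = 7 := by
    have k : ∀ u : ZMod 16, adjP 2 u → u ≠ 1 → u = 3 ∨ u = 7 := by decide
    have m := mapA 2 3 (by decide); rw [h2] at m
    have n1 := inj 3 1 (by decide); rw [h1] at n1
    exact k _ m n1
  rcases h3 with h3 | h3
  · have h7 : σ 7 = 7 := by
      have k : ∀ u : ZMod 16, adjP 2 u → u ≠ 1 → u ≠ 3 → u = 7 := by decide
      have m := mapA 2 7 (by decide); rw [h2] at m
      have n1 := inj 7 1 (by decide); rw [h1] at n1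
      have n3 := inj 7 3 (by decide); rw [h3] at n3
      exact k _ m n1 n3
    have h4 : σ 4 = 4 ∨ σ 4 = 14 := by
      have k : ∀ u : ZMod 16, adjP 3 u → u ≠ 2 → u = 4 ∨ u = 14 := by decide
      have m := mapA 3 4 (by decide); rw [h3] at m
      have n2 := inj 4 2 (by decide); rw [h2] at n2
      exact k _ m n2
    rcases h4 with h4 | h4
    · have h5 : σ 5 = 5 := by
        have k : ∀ u : ZMod 16, adjP 0 u → adjP 4 u → u = 5 := by decide
        have m1 := mapA 0 5 (by decide); rw [h0] at m1
        have m2 := mapA 4 5 (by decide); rw [h4] at m2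
        exact k _ m1 m2
      have h15 : σ 15 = 15 := by
        have k : ∀ u : ZMod 16, adjP 0 u → u ≠ 1 → u ≠ 5 → u = 15 := by decide
        have m := mapA 0 15 (by decide); rw [h0] at m
        have n1 := inj 15 1 (by decide); rw [h1] at n1
        have n5 := inj 15 5 (by decide); rw [h5] at n5
        exact k _ m n1 n5
      have h14 : σ 14 = 14 := by
        have k : ∀ u : ZMod 16, adjP 3 u → u ≠ 2 → u ≠ 4 → u = 14 := by decide
        have m := mapA 3 14 (by decide); rw [h3] at m
        have n2 := inj 14 2 (by decide); rw [h2] at n2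
        have n4 := inj 14 4 (by decide); rw [h4] at n4
        exact k _ m n2 n4
      have h9 : σ 9 = 9 := by
        have k : ∀ u : ZMod 16, adjP 4 u → u ≠ 3 → u ≠ 5 → u = 9 := by decide
        have m := mapA 4 9 (by decide); rw [h4] at m
        have n3 := inj 9 3 (by decide); rw [h3] at n3
        have n5 := inj 9 5 (by decide); rw [h5] at n5
        exact k _ m n3 n5
      have h6 : σ 6 = 6 := by
        have k : ∀ u : ZMod 16, adjP 5 u → adjP 7 u → u = 6 := by decide
        have m1 := mapA 5 6 (by decide); rw [h5] at m1
        have m2 := mapA 7 6 (by decide); rw [h7] at m2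
        exact k _ m1 m2
      have h13 : σ 13 = 13 := by
        have k : ∀ u : ZMod 16, adjP 14 u → adjP 12 u → u = 13 := by decide
        have m1 := mapA 14 13 (by decide); rw [h14] at m1
        have m2 := mapA 12 13 (by decide); rw [h12] at m2
        exact k _ m1 m2
      have h10 : σ 10 = 10 := by
        have k : ∀ u : ZMod 16, adjP 15 u → adjP 9 u → u = 10 := by decide
        have m1 := mapA 15 10 (by decide); rw [h15] at m1
        have m2 := mapA 9 10 (by decide); rw [h9] at m2
        exact k _ m1 m2
      have h11 : σ 11 = 11 := by
        have k : ∀ u : ZMod 16, adjP 12 u → adjP 10 u → u = 11 := by decide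
        have m1 := mapA 12 11 (by decide); rw [h12] at m1
        have m2 := mapA 10 11 (by decide); rw [h10] at m2
        exact k _ m1 m2
      have h8 : σ 8 = 8 := by
        have k : ∀ u : ZMod 16, adjP 7 u → adjP 9 u → u = 8 := by decide
        have m1 := mapA 7 8 (by decide); rw [h7] at m1
        have m2 := mapA 9 8 (by decide); rw [h9] at m2
        exact k _ m1 m2
      intro v
      have hv : ∀ w : ZMod 16, w = 0 ∨ w = 1 ∨ w = 2 ∨ w = 3 ∨ w = 4 ∨ w = 5 ∨ w = 6 ∨
          w = 7 ∨ w = 8 ∨ w = 9 ∨ w = 10 ∨ w = 11 ∨ w = 12 ∨ w = 13 ∨ w = 14 ∨ w = 15 := by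
        decide
      rcases hv v with rfl|rfl|rfl|rfl|rfl|rfl|rfl|rfl|rfl|rfl|rfl|rfl|rfl|rfl|rfl|rfl <;>
        assumption
    · exfalso
      have h5 : σ 5 = 15 := by
        have k : ∀ u : ZMod 16, adjP 0 u → adjP 14 u → u = 15 := by decide
        have m1 := mapA 0 5 (by decide); rw [h0] at m1
        have m2 := mapA 4 5 (by decide); rw [h4] at m2
        exact k _ m1 m2
      have k : ∀ u : ZMod 16, adjP 15 u → adjP 7 u → False := by decide
      have m1 := mapA 5 6 (by decide); rw [h5] at m1
      have m2 := mapA 7 6 (by decide); rw [h7] at m2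
      exact k _ m1 m2
  · exfalso
    have h7 : σ 7 = 3 := by
      have k : ∀ u : ZMod 16, adjP 2 u → u ≠ 1 → u ≠ 7 → u = 3 := by decide
      have m := mapA 2 7 (by decide); rw [h2] at m
      have n1 := inj 7 1 (by decide); rw [h1] at n1
      have n7 := inj 7 3 (by decide); rw [h3] at n7
      exact k _ m n1 n7
    have h4 : σ 4 = 6 ∨ σ 4 = 8 := by
      have k : ∀ u : ZMod 16, adjP 7 u → u ≠ 2 → u = 6 ∨ u = 8 := by decide
      have m := mapA 3 4 (by decide); rw [h3] at m
      have n2 := inj 4 2 (by decide); rw [h2] at n2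
      exact k _ m n2
    rcases h4 with h4 | h4
    · have h5 : σ 5 = 5 := by
        have k : ∀ u : ZMod 16, adjP 0 u → adjP 6 u → u = 5 := by decide
        have m1 := mapA 0 5 (by decide); rw [h0] at m1
        have m2 := mapA 4 5 (by decide); rw [h4] at m2
        exact k _ m1 m2
      have h14 : σ 14 = 8 := by
        have k : ∀ u : ZMod 16, adjP 7 u → u ≠ 2 → u ≠ 6 → u = 8 := by decide
        have m := mapA 3 14 (by decide); rw [h3] at m
        have n2 := inj 14 2 (by decide); rw [h2] at n2
        have n6 := inj 14 4 (by decide); rw [h4] at n6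
        exact k _ m n2 n6
      have h15 : σ 15 = 15 := by
        have k : ∀ u : ZMod 16, adjP 0 u → u ≠ 1 → u ≠ 5 → u = 15 := by decide
        have m := mapA 0 15 (by decide); rw [h0] at m
        have n1 := inj 15 1 (by decide); rw [h1] at n1
        have n5 := inj 15 5 (by decide); rw [h5] at n5
        exact k _ m n1 n5
      have m := mapA 14 15 (by decide); rw [h14, h15] at m
      exact (by decide : ¬ adjP (8 : ZMod 16) 15) m
    · have m1 := mapA 0 5 (by decide); rw [h0] at m1
      have m2 := mapA 4 5 (by decide); rw [h4] at m2
      exact (by decide : ∀ u : ZMod 16, adjP 0 u → adjP 8 u → False) _ m1 m2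

/-- The Möbius–Kantor graph is 2-arc-regular. -/
theorem stmt_13 (x0 x1 x2 y0 y1 y2 : ZMod 16)
    (hx01 : MKGraph.Adj x0 x1) (hx12 : MKGraph.Adj x1 x2) (hx02 : x0 ≠ x2)
    (hy01 : MKGraph.Adj y0 y1) (hy12 : MKGraph.Adj y1 y2) (hy02 : y0 ≠ y2) :
    ∃! φ : MKGraph ≃g MKGraph, φ x0 = y0 ∧ φ x1 = y1 ∧ φ x2 = y2 := by
  obtain ⟨φx, hxa, hxb, hxc⟩ :=
    exCanon x0 x1 x2 ((adj_iff _ _).1 hx01) ((adj_iff _ _).1 hx12) hx02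
  obtain ⟨φy, hya, hyb, hyc⟩ :=
    exCanon y0 y1 y2 ((adj_iff _ _).1 hy01) ((adj_iff _ _).1 hy12) hy02
  have hsx0 : φx.symm x0 = 0 := by rw [← hxa]; exact φx.symm_apply_apply 0
  have hsx1 : φx.symm x1 = 1 := by rw [← hxb]; exact φx.symm_apply_apply 1
  have hsx2 : φx.symm x2 = 2 := by rw [← hxc]; exact φx.symm_apply_apply 2
  refine ⟨φx.symm.trans φy, ⟨?_, ?_, ?_⟩, ?_⟩
  · rw [RelIso.trans_apply, hsx0, hya]
  · rw [RelIso.trans_apply, hsx1, hyb]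
  · rw [RelIso.trans_apply, hsx2, hyc]
  · rintro ψ ⟨p0, p1, p2⟩
    have c0 : ((φx.trans ψ).trans φy.symm) 0 = 0 := by
      rw [RelIso.trans_apply, RelIso.trans_apply, hxa, p0, ← hya,
        RelIso.symm_apply_apply]
    have c1 : ((φx.trans ψ).trans φy.symm) 1 = 1 := by
      rw [RelIso.trans_apply, RelIso.trans_apply, hxb, p1, ← hyb,
        RelIso.symm_apply_apply]
    have c2 : ((φx.trans ψ).trans φy.symm) 2 = 2 := by
      rw [RelIso.trans_apply, RelIso.trans_apply, hxc, p2, ← hyc,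
        RelIso.symm_apply_apply]
    have θfix := fixCanon ((φx.trans ψ).trans φy.symm) c0 c1 c2
    apply DFunLike.ext
    intro v
    have hv := θfix (φx.symm v)
    rw [RelIso.trans_apply, RelIso.trans_apply, RelIso.apply_symm_apply] at hv
    show ψ v = (φx.symm.trans φy) v
    rw [RelIso.trans_apply, ← hv, RelIso.apply_symm_apply]
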